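/- Let W: ℝ → ℝ be nondecreasing, vanishing on (−∞,0), concave on [0,∞), and suppose W(x)/x → c > 0 as x → ∞, with moreover W(x) − W(x−y) → c·y as x → ∞ for each fixed y > 0 and ∫_0^∞ (W(a) − W(a−y) − c y) da = I_y < ∞. Then for all x ≥ y > 0: 0 ≤ W(x) − W(x−y) − c·y ≤ (1/x)·(y·W(y) + I_y + c·y²). -/

import Mathlib

open MeasureTheory

/-- Four-point inequality for concave functions on `[0,∞)`. -/
lemma four_pt_concave (W : ℝ → ℝ) (hconc : ConcaveOn ℝ (Set.Ici (0 : ℝ)) W)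
    {a b c d : ℝ} (ha : 0 ≤ a) (hab : a ≤ b) (hbd : b ≤ d) (hcd : c ≤ d)
    (hsum : a + d = b + c) : W a + W d ≤ W b + W c := by
  rcases eq_or_lt_of_le (hab.trans hbd) with h | had
  · have hb : b = a := le_antisymm (h ▸ hbd) hab
    have hc : c = d := by linarith
    rw [hb, hc]
  · set t : ℝ := (b - a) / (d - a) with ht
    have hda : 0 < d - a := by linarith
    have ht0 : 0 ≤ t := div_nonneg (by linarith) hda.le
    have ht1 : t ≤ 1 := (div_le_one hda).2 (by linarith)
    have haI : a ∈ Set.Ici (0 : ℝ) := ha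
    have hdI : d ∈ Set.Ici (0 : ℝ) := le_trans ha had.le
    have hb_eq : (1 - t) • a + t • d = b := by
      simp only [smul_eq_mul]
      field_simp [ht]
      rw [ht]; linear_combination div_mul_cancel₀ (b - a) hda.ne'
    have hc_eq : t • a + (1 - t) • d = c := by
      simp only [smul_eq_mul]
      field_simp [ht]
      rw [ht]; linear_combination (-1 : ℝ) * div_mul_cancel₀ (b - a) hda.ne' + hsum
    have h1 := hconc.2 haI hdI (by linarith : (0:ℝ) ≤ 1 - t) ht0 (by ring)
    have h2 := hconc.2 haI hdI ht0 (by linarith : (0:ℝ) ≤ 1 - t) (by ring)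
    rw [hb_eq] at h1
    rw [hc_eq] at h2
    simp only [smul_eq_mul] at h1 h2
    linarith

/-- Increments of a concave function are nonincreasing. -/
lemma incr_anti (W : ℝ → ℝ) (hconc : ConcaveOn ℝ (Set.Ici (0 : ℝ)) W)
    {y u v : ℝ} (hy : 0 < y) (hu : y ≤ u) (huv : u ≤ v) :
    W v - W (v - y) ≤ W u - W (u - y) := by
  have := four_pt_concave W hconc (a := u - y) (b := u) (c := v - y) (d := v)
    (by linarith) (by linarith) (by linarith) (by linarith) (by ring)
  linarith

/-- Quantitative bound on increments of the concave tilted scale function: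
`0 ≤ W(x) − W(x−y) − c·y ≤ (1/x)(y·W(y) + I_y + c·y²)` for `x ≥ y > 0`. -/
theorem stmt_7 (W : ℝ → ℝ) (c : ℝ) (hc : 0 < c)
    (hmono : Monotone W)
    (hzero : ∀ x < (0 : ℝ), W x = 0)
    (hconc : ConcaveOn ℝ (Set.Ici (0 : ℝ)) W)
    (hlin : Filter.Tendsto (fun x => W x / x) Filter.atTop (nhds c))
    (hincr : ∀ y > (0 : ℝ),
      Filter.Tendsto (fun x => W x - W (x - y)) Filter.atTop (nhds (c * y)))
    (y : ℝ) (hy : 0 < y) (Iy : ℝ)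
    (hint : IntegrableOn (fun a => W a - W (a - y) - c * y) (Set.Ioi 0) volume)
    (hIy : (∫ a in Set.Ioi (0 : ℝ), (W a - W (a - y) - c * y)) = Iy) :
    ∀ x : ℝ, y ≤ x →
      0 ≤ W x - W (x - y) - c * y ∧
        W x - W (x - y) - c * y ≤ (1 / x) * (y * W y + Iy + c * y ^ 2) := by
  set f : ℝ → ℝ := fun a => W a - W (a - y) - c * y with hf
  -- f tends to 0 at infinity
  have hf0 : Filter.Tendsto f Filter.atTop (nhds 0) := by
    have := (hincr y hy).sub_const (c * y)
    simpa using this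
  -- f is nonnegative for x ≥ y
  have hfnonneg : ∀ x : ℝ, y ≤ x → 0 ≤ f x := by
    intro x hx
    refine le_of_tendsto hf0 ?_
    filter_upwards [Filter.eventually_ge_atTop x] with z hz
    have := incr_anti W hconc hy hx hz
    simp only [hf]
    linarith
  -- W is nonnegative (on all of ℝ for arguments, since W(-1)=0)
  have hWnonneg : ∀ x : ℝ, 0 ≤ W x := by
    intro x
    rcases lt_or_ge x 0 with h | h
    · exact (hzero x h).ge
    · have : W (-1) ≤ W x := hmono (by linarith)
      rw [hzero (-1) (by norm_num)] at this
      exact this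
  -- the crude lower bound f ≥ -c*y everywhere
  have hflb : ∀ a : ℝ, -(c * y) ≤ f a := by
    intro a
    have : W (a - y) ≤ W a := hmono (by linarith)
    simp only [hf]
    linarith
  intro x hx
  have hx0 : 0 < x := lt_of_lt_of_le hy hx
  constructor
  · exact hfnonneg x hx
  · -- Key: split the integral
    have hmeas_Iocyx : MeasurableSet (Set.Ioc y x) := measurableSet_Ioc
    have hmeas_Ioc0y : MeasurableSet (Set.Ioc 0 y) := measurableSet_Ioc
    have hint1 : IntegrableOn f (Set.Ioc 0 y) volume :=
      hint.mono_set (Set.Ioc_subset_Ioi_self)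
    have hint2 : IntegrableOn f (Set.Ioc y x) volume :=
      hint.mono_set (fun a ha => lt_trans hy ha.1)
    have hint3 : IntegrableOn f (Set.Ioi x) volume :=
      hint.mono_set (fun a ha => lt_trans hx0 ha)
    have hint12 : IntegrableOn f (Set.Ioc 0 x) volume :=
      hint.mono_set (Set.Ioc_subset_Ioi_self)
    -- split Ioi 0 = Ioc 0 x ∪ Ioi x
    have hsplit1 : (∫ a in Set.Ioi (0:ℝ), f a) =
        (∫ a in Set.Ioc (0:ℝ) x, f a) + ∫ a in Set.Ioi x, f a := by
      rw [← setIntegral_union (Set.Ioc_disjoint_Ioi le_rfl) measurableSet_Ioi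
        hint12 hint3, Set.Ioc_union_Ioi_eq_Ioi hx0.le]
    -- split Ioc 0 x = Ioc 0 y ∪ Ioc y x
    have hsplit2 : (∫ a in Set.Ioc (0:ℝ) x, f a) =
        (∫ a in Set.Ioc (0:ℝ) y, f a) + ∫ a in Set.Ioc y x, f a := by
      rw [← setIntegral_union (Set.Ioc_disjoint_Ioc_of_le le_rfl) hmeas_Iocyx
        hint1 hint2, Set.Ioc_union_Ioc_eq_Ioc hy.le hx]
    -- tail integral nonneg
    have htail : 0 ≤ ∫ a in Set.Ioi x, f a := by
      apply setIntegral_nonneg measurableSet_Ioi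
      intro a ha
      exact hfnonneg a (le_trans hx (le_of_lt ha))
    -- middle integral ≥ (x - y) * f x
    have hmid : (x - y) * f x ≤ ∫ a in Set.Ioc y x, f a := by
      have hconst : (∫ _ in Set.Ioc y x, f x) = (x - y) * f x := by
        rw [setIntegral_const, Real.volume_real_Ioc_of_le (by linarith), smul_eq_mul]
      rw [← hconst]
      apply setIntegral_mono_on (integrableOn_const (by
        rw [Real.volume_Ioc]; exact ENNReal.ofReal_ne_top)) hint2 hmeas_Iocyx
      intro a ha
      have := incr_anti W hconc hy (le_of_lt ha.1) ha.2
      simp only [hf]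
      linarith
    -- first integral ≥ -c*y^2
    have hfirst : -(c * y ^ 2) ≤ ∫ a in Set.Ioc (0:ℝ) y, f a := by
      have hconst : (∫ _ in Set.Ioc (0:ℝ) y, -(c * y)) = -(c * y ^ 2) := by
        rw [setIntegral_const, Real.volume_real_Ioc_of_le (by linarith), smul_eq_mul]
        ring
      rw [← hconst]
      apply setIntegral_mono_on (integrableOn_const (by
        rw [Real.volume_Ioc]; exact ENNReal.ofReal_ne_top)) hint1 hmeas_Ioc0y
      intro a _
      exact hflb a
    -- put together: (x - y) * f x ≤ Iy + c*y^2
    have hkey : (x - y) * f x ≤ Iy + c * y ^ 2 := by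
      have : (∫ a in Set.Ioi (0:ℝ), f a) = Iy := hIy
      rw [hsplit1, hsplit2] at this
      linarith
    -- f x ≤ W y
    have hfW : f x ≤ W y := by
      have h1 : W x - W (x - y) ≤ W y - W (y - y) :=
        incr_anti W hconc hy le_rfl hx
      have h2 : 0 ≤ W (y - y) := hWnonneg _
      have h3 : 0 < c * y := mul_pos hc hy
      simp only [hf]
      linarith
    -- conclude
    have hxf : x * f x ≤ y * W y + Iy + c * y ^ 2 := by
      have h4 : y * f x ≤ y * W y := mul_le_mul_of_nonneg_left hfW hy.le
      nlinarith [hkey]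
    have : f x ≤ (1 / x) * (y * W y + Iy + c * y ^ 2) := by
      rw [div_mul_eq_mul_div, one_mul, le_div_iff₀ hx0]
      linarith [hxf]
    simpa [hf] using this
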